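/- Let x, y, w, u, z, a be finite random variables such that x ⊥ (w,z) | (a,u) and y ⊥ x | (a,u). If the square matrices P(U | a, X), P(Y | a, X), and P(Y | a, U) are all invertible, then P(W, z | a, U) = P(W, z | a, X)·P(Y | a, X)^{-1}·P(Y | a, U). -/
import Mathlib


open Finset Matrix
open scoped Classical

noncomputable def Pr {Ω : Type*} [Fintype Ω] (μ : Ω → ℝ) (E : Ω → Prop) : ℝ :=
  ∑ ω, if E ω then μ ω else 0

noncomputable def cPr {Ω : Type*} [Fintype Ω] (μ : Ω → ℝ) (E F : Ω → Prop) : ℝ :=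
  Pr μ (fun ω => E ω ∧ F ω) / Pr μ F

section aux

variable {Ω : Type*} [Fintype Ω] (μ : Ω → ℝ)

lemma Pr_congr {E F : Ω → Prop} (h : ∀ ω, E ω ↔ F ω) : Pr μ E = Pr μ F := by
  unfold Pr
  exact Finset.sum_congr rfl fun ω _ => by rw [h ω]

lemma Pr_and_eq_zero (hμ : ∀ ω, 0 ≤ μ ω) {E F : Ω → Prop} (h : Pr μ F = 0) :
    Pr μ (fun ω => E ω ∧ F ω) = 0 := by
  unfold Pr at *
  have h0 : ∀ ω ∈ (Finset.univ : Finset Ω), (if F ω then μ ω else 0) = 0 := by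
    refine (Finset.sum_eq_zero_iff_of_nonneg ?_).mp h
    intro ω _
    split <;> simp [hμ ω]
  refine Finset.sum_eq_zero fun ω _ => ?_
  by_cases hE : E ω ∧ F ω
  · have := h0 ω (Finset.mem_univ ω)
    simp [hE, hE.2] at this ⊢
    simpa [hE.2] using this
  · simp [hE]

lemma Pr_total {m : ℕ} (u : Ω → Fin m) (G : Ω → Prop) :
    Pr μ G = ∑ j, Pr μ (fun ω => G ω ∧ u ω = j) := by
  unfold Pr
  rw [Finset.sum_comm]
  refine Finset.sum_congr rfl fun ω _ => ?_
  by_cases hG : G ω <;> simp [hG]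

lemma cPr_decomp {n m : ℕ} {Aty : Type*} (u : Ω → Fin n) (x : Ω → Fin m) (a : Ω → Aty)
    (hμ : ∀ ω, 0 ≤ μ ω) (av : Aty) (k : Fin m)
    (hposx : 0 < Pr μ (fun ω => a ω = av ∧ x ω = k))
    (E : Ω → Prop)
    (hCI : ∀ j, cPr μ E (fun ω => a ω = av ∧ u ω = j ∧ x ω = k)
              = cPr μ E (fun ω => a ω = av ∧ u ω = j)) :
    cPr μ E (fun ω => a ω = av ∧ x ω = k)
      = ∑ j, cPr μ E (fun ω => a ω = av ∧ u ω = j)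
             * cPr μ (fun ω => u ω = j) (fun ω => a ω = av ∧ x ω = k) := by
  have hx : Pr μ (fun ω => a ω = av ∧ x ω = k) ≠ 0 := hposx.ne'
  have hnum : Pr μ (fun ω => E ω ∧ a ω = av ∧ x ω = k)
      = ∑ j, cPr μ E (fun ω => a ω = av ∧ u ω = j)
             * cPr μ (fun ω => u ω = j) (fun ω => a ω = av ∧ x ω = k)
             * Pr μ (fun ω => a ω = av ∧ x ω = k) := by
    rw [Pr_total μ u (fun ω => E ω ∧ a ω = av ∧ x ω = k)]
    refine Finset.sum_congr rfl fun j _ => ?_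
    have e1 : Pr μ (fun ω => (E ω ∧ a ω = av ∧ x ω = k) ∧ u ω = j)
        = Pr μ (fun ω => E ω ∧ (a ω = av ∧ u ω = j ∧ x ω = k)) :=
      Pr_congr μ (by tauto)
    have e2 : Pr μ (fun ω => E ω ∧ (a ω = av ∧ u ω = j ∧ x ω = k))
        = cPr μ E (fun ω => a ω = av ∧ u ω = j ∧ x ω = k)
          * Pr μ (fun ω => a ω = av ∧ u ω = j ∧ x ω = k) := by
      unfold cPr
      by_cases hF : Pr μ (fun ω => a ω = av ∧ u ω = j ∧ x ω = k) = 0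
      · rw [hF, mul_zero]
        exact Pr_and_eq_zero μ hμ hF
      · rw [div_mul_cancel₀ _ hF]
    have e3 : Pr μ (fun ω => a ω = av ∧ u ω = j ∧ x ω = k)
        = cPr μ (fun ω => u ω = j) (fun ω => a ω = av ∧ x ω = k)
          * Pr μ (fun ω => a ω = av ∧ x ω = k) := by
      unfold cPr
      rw [div_mul_cancel₀ _ hx]
      exact Pr_congr μ (by tauto)
    rw [e1, e2, hCI j, e3, mul_assoc]
  unfold cPr
  rw [hnum, Finset.sum_div]
  refine Finset.sum_congr rfl fun j _ => ?_
  rw [mul_div_assoc, div_self hx, mul_one]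
  rfl

end aux

/-- Lemma 5 of the paper: if `x ⊥ (w,z) | (a,u)` and `y ⊥ x | (a,u)` and the
square matrices `P(U|a,X)`, `P(Y|a,X)`, `P(Y|a,U)` are invertible, then
`P(W, z | a, U) = P(W, z | a, X) * P(Y | a, X)⁻¹ * P(Y | a, U)`.
Here `u, x, y` take values in sets of common cardinality `n`. -/
theorem effect_restoration_factorization
    {Ω : Type*} [Fintype Ω] (μ : Ω → ℝ) {n nw nz : ℕ} {Aty : Type*}
    (x : Ω → Fin n) (y : Ω → Fin n) (u : Ω → Fin n)
    (w : Ω → Fin nw) (z : Ω → Fin nz) (a : Ω → Aty)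
    (hμ : ∀ ω, 0 ≤ μ ω) (hsum : ∑ ω, μ ω = 1)
    (av : Aty) (zv : Fin nz)
    (hposu : ∀ j, 0 < Pr μ (fun ω => a ω = av ∧ u ω = j))
    (hposx : ∀ k, 0 < Pr μ (fun ω => a ω = av ∧ x ω = k))
    -- x ⊥ (w,z) | (a,u)
    (hCI1 : ∀ (wv : Fin nw) (zv' : Fin nz) (j k : Fin n),
      cPr μ (fun ω => w ω = wv ∧ z ω = zv')
          (fun ω => a ω = av ∧ u ω = j ∧ x ω = k) =
        cPr μ (fun ω => w ω = wv ∧ z ω = zv') (fun ω => a ω = av ∧ u ω = j))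
    -- y ⊥ x | (a,u)
    (hCI2 : ∀ (yv j k : Fin n),
      cPr μ (fun ω => y ω = yv) (fun ω => a ω = av ∧ u ω = j ∧ x ω = k) =
        cPr μ (fun ω => y ω = yv) (fun ω => a ω = av ∧ u ω = j))
    (hinvUX : IsUnit (Matrix.of fun (j k : Fin n) =>
        cPr μ (fun ω => u ω = j) (fun ω => a ω = av ∧ x ω = k)).det)
    (hinvYX : IsUnit (Matrix.of fun (i k : Fin n) =>
        cPr μ (fun ω => y ω = i) (fun ω => a ω = av ∧ x ω = k)).det)
    (hinvYU : IsUnit (Matrix.of fun (i j : Fin n) =>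
        cPr μ (fun ω => y ω = i) (fun ω => a ω = av ∧ u ω = j)).det) :
    (Matrix.of fun (i : Fin nw) (j : Fin n) =>
        cPr μ (fun ω => w ω = i ∧ z ω = zv) (fun ω => a ω = av ∧ u ω = j)) =
    (Matrix.of fun (i : Fin nw) (k : Fin n) =>
        cPr μ (fun ω => w ω = i ∧ z ω = zv) (fun ω => a ω = av ∧ x ω = k)) *
    (Matrix.of fun (i k : Fin n) =>
        cPr μ (fun ω => y ω = i) (fun ω => a ω = av ∧ x ω = k))⁻¹ *
    (Matrix.of fun (i j : Fin n) =>
        cPr μ (fun ω => y ω = i) (fun ω => a ω = av ∧ u ω = j)) := by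
  set M : Matrix (Fin n) (Fin n) ℝ := Matrix.of fun (j k : Fin n) =>
    cPr μ (fun ω => u ω = j) (fun ω => a ω = av ∧ x ω = k) with hM
  set WU : Matrix (Fin nw) (Fin n) ℝ := Matrix.of fun i j =>
    cPr μ (fun ω => w ω = i ∧ z ω = zv) (fun ω => a ω = av ∧ u ω = j) with hWU
  set WX : Matrix (Fin nw) (Fin n) ℝ := Matrix.of fun i k =>
    cPr μ (fun ω => w ω = i ∧ z ω = zv) (fun ω => a ω = av ∧ x ω = k) with hWX
  set YU : Matrix (Fin n) (Fin n) ℝ := Matrix.of fun i j =>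
    cPr μ (fun ω => y ω = i) (fun ω => a ω = av ∧ u ω = j) with hYU
  set YX : Matrix (Fin n) (Fin n) ℝ := Matrix.of fun i k =>
    cPr μ (fun ω => y ω = i) (fun ω => a ω = av ∧ x ω = k) with hYX
  have hWXeq : WX = WU * M := by
    ext i k
    rw [Matrix.mul_apply]
    exact cPr_decomp μ u x a hμ av k (hposx k) _ (fun j => hCI1 i zv j k)
  have hYXeq : YX = YU * M := by
    ext i k
    rw [Matrix.mul_apply]
    exact cPr_decomp μ u x a hμ av k (hposx k) _ (fun j => hCI2 i j k)
  have : WX * YX⁻¹ * YU = WU := by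
    rw [hWXeq, hYXeq, Matrix.mul_inv_rev]
    calc WU * M * (M⁻¹ * YU⁻¹) * YU
        = WU * (M * M⁻¹) * (YU⁻¹ * YU) := by
          simp only [Matrix.mul_assoc]
      _ = WU := by
          rw [Matrix.mul_nonsing_inv _ hinvUX, Matrix.nonsing_inv_mul _ hinvYU,
            Matrix.mul_one, Matrix.mul_one]
  exact this.symm
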